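/- Lemma (marking equivalence): Let f be a BN of dimension n, x̂ ∈ {0,1,↗,↘}^n, t ∈ T_i a transition of the encoding N(f), and m ∈ μ(x̂) a compatible marking with enab(t,m) > 0. Then for any other compatible marking m' ∈ μ(x̂), enab(t,m') > 0; moreover enab(t, ⟨x̂⟩) ≥ 0.5 for the canonical marking ⟨x̂⟩. -/
import Mathlib


open Relation Filter

/-! ### Boolean networks and their semantics -/

abbrev Config (n : ℕ) := Fin n → Bool
abbrev BN (n : ℕ) := Config n → Fin n → Bool

def Delta {n : ℕ} (x y : Config n) : Set (Fin n) := {i | x i ≠ y i}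

def fa {n : ℕ} (f : BN n) (x y : Config n) : Prop :=
  ∃ i, Delta x y = {i} ∧ f x i = y i

def syn {n : ℕ} (f : BN n) (x y : Config n) : Prop := ∀ i, f x i = y i

def ga {n : ℕ} (f : BN n) (x y : Config n) : Prop := ∀ i ∈ Delta x y, f x i = y i

/-! ### Most permissive semantics -/

inductive MPV where
  | b : Bool → MPV
  | up : MPV
  | down : MPV
deriving DecidableEq

abbrev MPConfig (n : ℕ) := Fin n → MPV

def toMP {n : ℕ} (x : Config n) : MPConfig n := fun i => .b (x i)

def beta {n : ℕ} (xh : MPConfig n) : Set (Config n) :=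
  {x | ∀ i v, xh i = .b v → x i = v}

def mpStep {n : ℕ} (f : BN n) (xh yh : MPConfig n) : Prop :=
  ∃ i, (∀ j, j ≠ i → xh j = yh j) ∧ xh i ≠ yh i ∧
    ((xh i = .up ∧ yh i = .b true) ∨
     (xh i = .down ∧ yh i = .b false) ∨
     (xh i ≠ .b true ∧ yh i = .up ∧ ∃ x ∈ beta xh, f x i = true) ∨
     (xh i ≠ .b false ∧ yh i = .down ∧ ∃ x ∈ beta xh, f x i = false))

def mp {n : ℕ} (f : BN n) (x y : Config n) : Prop :=
  ReflTransGen (mpStep f) (toMP x) (toMP y)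

/-! ### Petri nets (discrete and continuous) -/

structure Net (P T : Type) where
  wPT : P → T → ℕ
  wTP : T → P → ℕ

def dfire {P T : Type} (N : Net P T) (t : T) (M M' : P → ℕ) : Prop :=
  (∀ p, N.wPT p t ≤ M p) ∧ ∀ p, M' p = M p - N.wPT p t + N.wTP t p

def dReach {P T : Type} (N : Net P T) : (P → ℕ) → (P → ℕ) → Prop :=
  ReflTransGen (fun M M' => ∃ t, dfire N t M M')

def cfire {P T : Type} (N : Net P T) (t : T) (α : ℝ) (m m' : P → ℝ) : Prop :=
  0 ≤ α ∧ (∀ p, α * N.wPT p t ≤ m p) ∧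
    ∀ p, m' p = m p - α * N.wPT p t + α * N.wTP t p

def cReach {P T : Type} (N : Net P T) : (P → ℝ) → (P → ℝ) → Prop :=
  ReflTransGen (fun m m' => ∃ t α, cfire N t α m m')

def limReach {P T : Type} (N : Net P T) (m m' : P → ℝ) : Prop :=
  ∃ ms : ℕ → P → ℝ, ms 0 = m ∧
    (∀ k, ∃ t α, cfire N t α (ms k) (ms (k+1))) ∧
    Tendsto ms atTop (nhds m')

def IsTrap {P T : Type} (N : Net P T) (S : Set P) : Prop :=
  ∀ t, (∃ p ∈ S, 0 < N.wPT p t) → ∃ p ∈ S, 0 < N.wTP t p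

def enabPos {P T : Type} (N : Net P T) (t : T) (m : P → ℝ) : Prop :=
  ∀ p, 0 < N.wPT p t → 0 < m p

def enabGe {P T : Type} (N : Net P T) (t : T) (m : P → ℝ) (c : ℝ) : Prop :=
  ∀ p, 0 < N.wPT p t → c * N.wPT p t ≤ m p

/-! ### Petri net encoding of Boolean networks -/

abbrev Clause (n : ℕ) := Fin n → Option Bool

def satC {n : ℕ} (z : Config n) (C : Clause n) : Prop :=
  ∀ j v, C j = some v → z j = v

structure ETrans (n : ℕ) where
  i : Fin n
  s : Bool
  C : Clause n

abbrev EPlace (n : ℕ) := Fin n × Bool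

def encNet (n : ℕ) : Net (EPlace n) (ETrans n) where
  wPT := fun p t =>
    if p.1 = t.i then (if p.2 = !t.s then 1 else 0)
    else (if t.C p.1 = some p.2 then 1 else 0)
  wTP := fun t p =>
    if p.1 = t.i then (if p.2 = t.s then 1 else 0)
    else (if t.C p.1 = some p.2 then 1 else 0)

def mu {n : ℕ} (xh : MPConfig n) : Set (EPlace n → ℝ) :=
  {m | (∀ p, 0 ≤ m p) ∧ ∀ i,
    m (i, false) + m (i, true) = 1 ∧
    (∀ v, xh i = .b v → m (i, v) = 1) ∧
    ((xh i = .up ∨ xh i = .down) →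
      0 < m (i, false) ∧ m (i, false) < 1 ∧ 0 < m (i, true) ∧ m (i, true) < 1)}

noncomputable def canon {n : ℕ} (xh : MPConfig n) : EPlace n → ℝ := fun p =>
  match xh p.1 with
  | .b v => if p.2 = v then 1 else 0
  | _ => 1/2

def validT {n : ℕ} (D : Fin n → Bool → Set (Clause n)) (t : ETrans n) : Prop :=
  t.C ∈ D t.i t.s

def IsDNF {n : ℕ} (f : BN n) (D : Fin n → Bool → Set (Clause n)) : Prop :=
  (∀ i s z, (∃ C ∈ D i s, satC z C) ↔ (z i = !s ∧ f z i = s)) ∧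
  (∀ i s C, C ∈ D i s → C i = some (!s))

def cReachG {P T : Type} (N : Net P T) (good : T → Prop) :
    (P → ℝ) → (P → ℝ) → Prop :=
  ReflTransGen (fun m m' => ∃ t, good t ∧ ∃ α, cfire N t α m m')

def climReachG {P T : Type} (N : Net P T) (good : T → Prop) (m m' : P → ℝ) : Prop :=
  ∃ ms : ℕ → P → ℝ, ms 0 = m ∧
    (∀ k, ∃ t, good t ∧ ∃ α, cfire N t α (ms k) (ms (k+1))) ∧
    Tendsto ms atTop (nhds m')

/-- marking equivalence: if a transition of the encoding is
enabled at some marking compatible with an MP configuration x̂, then it is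
enabled at every compatible marking, and its enabling degree at the
canonical marking ⟨x̂⟩ is at least 0.5. -/
theorem marking_equivalence {n : ℕ} (xh : MPConfig n) (t : ETrans n)
    (m : EPlace n → ℝ) (hm : m ∈ mu xh) (he : enabPos (encNet n) t m) :
    (∀ m' ∈ mu xh, enabPos (encNet n) t m') ∧
      enabGe (encNet n) t (canon xh) (1/2) := by
  obtain ⟨hm0, hm1⟩ := hm
  -- weights are at most 1
  have hw1 : ∀ p, (encNet n).wPT p t ≤ 1 := by
    intro p
    simp only [encNet]
    split_ifs <;> omega
  -- if the place has positive weight and xh at its index is Boolean,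
  -- the place's boolean must match the configured value
  have key : ∀ p : EPlace n, 0 < (encNet n).wPT p t →
      ∀ v, xh p.1 = .b v → p.2 = v := by
    intro p hw v hv
    by_contra hne
    obtain ⟨hsum, hb, _⟩ := hm1 p.1
    have h1 : m (p.1, v) = 1 := hb v hv
    have hp2 : p.2 = !v := by
      cases hv2 : p.2 <;> cases v <;> simp_all
    have hmp : m p = 0 := by
      have hs : m (p.1, false) + m (p.1, true) = 1 := hsum
      have hnn := hm0 (p.1, !v)
      have : m (p.1, !v) = 0 := by cases v <;> simp_all <;> linarith
      have : m (p.1, p.2) = 0 := by rw [hp2]; exact this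
      simpa using this
    have := he p hw
    linarith
  constructor
  · intro m' hm' p hw
    obtain ⟨hm'0, hm'1⟩ := hm'
    obtain ⟨hsum, hb, ht⟩ := hm'1 p.1
    cases hx : xh p.1 with
    | b v =>
      have hpv := key p hw v hx
      have : m' (p.1, v) = 1 := hb v hx
      have : m' (p.1, p.2) = 1 := by rw [hpv]; exact this
      simp at this
      rw [show p = (p.1, p.2) from rfl]
      simp [this]
    | up =>
      have := ht (Or.inl hx)
      cases hv2 : p.2 <;> rw [show p = (p.1, p.2) from rfl, hv2] <;> tauto
    | down =>
      have := ht (Or.inr hx)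
      cases hv2 : p.2 <;> rw [show p = (p.1, p.2) from rfl, hv2] <;> tauto
  · intro p hw
    have hwle := hw1 p
    have hweq : (encNet n).wPT p t = 1 := by omega
    rw [hweq]
    cases hx : xh p.1 with
    | b v =>
      have hpv := key p hw v hx
      have : canon xh p = 1 := by
        simp [canon, hx, hpv]
      rw [this]; norm_num
    | up =>
      have : canon xh p = 1/2 := by simp [canon, hx]
      rw [this]; norm_num
    | down =>
      have : canon xh p = 1/2 := by simp [canon, hx]
      rw [this]; norm_num
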